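/- Let K be a field and f(x) a doubly monic polynomial of degree n > 3 over K with f(1) ≠ 0. Then f is 2-regular over K if and only if there is no polynomial g(x) of degree 2 with coefficients in an algebraic closure of K dividing both f(x) and its signed reciprocal f*(x). -/

import Mathlib

open Polynomial

/-- `f` is `k`-regular over `K`: no product of `k` roots of `f` (with distinct
indices, counting multiplicity) in an algebraic closure of `K` equals `1`. -/
def kRegular (K : Type*) [Field K] (f : Polynomial K) (k : ℕ) : Prop :=
  ∀ s : Multiset (AlgebraicClosure K),
    s ≤ (f.map (algebraMap K (AlgebraicClosure K))).roots →
    Multiset.card s = k → s.prod ≠ 1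

/-- The signed reciprocal polynomial `f*(t) = (-1)^n t^n f(t⁻¹)` of a (doubly monic)
polynomial of degree `n`. -/
noncomputable def signedReciprocal {R : Type*} [CommRing R] (f : Polynomial R) : Polynomial R :=
  (-1 : Polynomial R) ^ f.natDegree * f.reverse

section Aux

lemma aux_reverse_X_sub_C {A : Type*} [Field A] (γ : A) :
    (X - C γ).reverse = 1 - C γ * X := by
  rw [reverse, natDegree_X_sub_C, reflect_sub, reflect_C, pow_one]
  simp

lemma aux_reverse_multiset_prod {A : Type*} [Field A] (s : Multiset (Polynomial A)) :
    s.prod.reverse = (s.map reverse).prod := by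
  induction s using Multiset.induction_on with
  | empty => simp [reverse]
  | cons a s ih => simp [reverse_mul_of_domain, ih]

lemma aux_roots_reverse {A : Type*} [Field A] [IsAlgClosed A] {F : Polynomial A}
    (hm : F.Monic) (h0 : F.coeff 0 ≠ 0) :
    F.reverse.roots = F.roots.map (·⁻¹) := by
  have hF0 : F ≠ 0 := hm.ne_zero
  have hroots : ∀ γ ∈ F.roots, γ ≠ 0 := by
    intro γ hγ h
    subst h
    exact h0 (by simpa [coeff_zero_eq_eval_zero] using ((mem_roots hF0).mp hγ))
  have hprod : F = (F.roots.map fun a => X - C a).prod :=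
    (IsAlgClosed.splits F).eq_prod_roots_of_monic hm
  have hcongr : ∀ γ ∈ F.roots, (X - C γ).reverse = C (-γ) * (X - C γ⁻¹) := by
    intro γ hγ
    rw [aux_reverse_X_sub_C, mul_sub, ← C_mul, neg_mul,
      mul_inv_cancel₀ (hroots γ hγ), map_neg, map_neg, map_one]
    ring
  conv_lhs => rw [hprod]
  rw [aux_reverse_multiset_prod, Multiset.map_map]
  rw [Multiset.map_congr rfl (by intro γ hγ; exact hcongr γ hγ)]
  rw [Multiset.prod_map_mul]
  have hc : (F.roots.map fun γ => C (-γ)).prod ≠ 0 := by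
    apply Multiset.prod_ne_zero
    intro h
    obtain ⟨γ, hγ, hγ0⟩ := Multiset.mem_map.mp h
    exact hroots γ hγ (by simpa using hγ0.symm)
  obtain ⟨c, hcc⟩ : ∃ c : A, (F.roots.map fun γ => C (-γ)).prod = C c := by
    refine ⟨(F.roots.map fun γ => -γ).prod, ?_⟩
    rw [map_multiset_prod (C : A →+* Polynomial A), Multiset.map_map]
    rfl
  rw [hcc] at hc ⊢
  rw [roots_C_mul _ (by simpa using hc)]
  rw [show (F.roots.map fun γ => X - C γ⁻¹) = (F.roots.map (·⁻¹)).map fun a => X - C a by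
    rw [Multiset.map_map]; rfl]
  exact roots_multiset_prod_X_sub_C _

lemma aux_pair_le {α : Type*} [DecidableEq α] {a b : α} {s : Multiset α} (hab : a ≠ b)
    (ha : a ∈ s) (hb : b ∈ s) : ({a, b} : Multiset α) ≤ s := by
  rw [Multiset.le_iff_count]
  intro c
  rw [show ({a, b} : Multiset α) = a ::ₘ {b} from rfl, Multiset.count_cons,
    Multiset.count_singleton]
  by_cases hca : c = a
  · subst hca
    simp only [if_pos rfl, if_neg hab]
    simpa [Multiset.one_le_count_iff_mem] using ha
  · by_cases hcb : c = b
    · subst hcb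
      simp only [if_pos rfl, if_neg hca]
      simpa [Multiset.one_le_count_iff_mem] using hb
    · simp [hca, hcb]


end Aux

theorem twoRegular_iff_no_common_quadratic_factor {K : Type*} [Field K] (f : Polynomial K)
    (n : ℕ) (hmonic : f.Monic) (hdeg : f.natDegree = n) (hdm : f.coeff 0 = (-1) ^ n)
    (hn : 3 < n) (h1 : f.eval 1 ≠ 0) :
    kRegular K f 2 ↔
      ¬ ∃ g : Polynomial (AlgebraicClosure K), g.degree = 2 ∧
        g ∣ f.map (algebraMap K (AlgebraicClosure K)) ∧
        g ∣ (signedReciprocal f).map (algebraMap K (AlgebraicClosure K)) := by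
  classical
  set A := AlgebraicClosure K
  set φ := algebraMap K A with hφ
  set F := f.map φ with hF
  have hFm : F.Monic := hmonic.map φ
  have hF0 : F ≠ 0 := hFm.ne_zero
  have hG0 : F.reverse ≠ 0 := fun h => hF0 (reverse_eq_zero.mp h)
  have hFc0 : F.coeff 0 ≠ 0 := by
    rw [hF, coeff_map, hdm]
    simp
  have hF1 : F.eval 1 ≠ 0 := by
    rw [hF, eval_one_map]
    exact fun h => h1 (RingHom.injective φ (by rw [h, map_zero]))
  have hroots_rev : F.reverse.roots = F.roots.map (·⁻¹) := aux_roots_reverse hFm hFc0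
  have hrootne : ∀ γ ∈ F.roots, γ ≠ 0 := by
    intro γ hγ h
    subst h
    exact hFc0 (by simpa [coeff_zero_eq_eval_zero] using ((mem_roots hF0).mp hγ))
  have hne1 : ∀ γ ∈ F.roots, γ ≠ 1 := by
    intro γ hγ h
    subst h
    exact hF1 ((mem_roots hF0).mp hγ)
  have hinvmem : ∀ {γ : A}, γ ∈ F.roots → γ⁻¹ ∈ F.reverse.roots := by
    intro γ h
    rw [hroots_rev]
    exact Multiset.mem_map_of_mem _ h
  have hinvmem' : ∀ {γ : A}, γ ∈ F.reverse.roots → γ⁻¹ ∈ F.roots := by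
    intro γ h
    rw [hroots_rev] at h
    obtain ⟨a, ha, rfl⟩ := Multiset.mem_map.mp h
    rwa [inv_inv]
  have hsr : (signedReciprocal f).map φ = (-1) ^ n * F.reverse := by
    rw [signedReciprocal, Polynomial.map_mul, Polynomial.map_pow, Polynomial.map_neg,
      Polynomial.map_one, hdeg]
    congr 1
    rw [reverse, reverse, hF, natDegree_map, reflect_map]
  have hkey : ((-1 : Polynomial A) ^ n) * ((-1) ^ n * F.reverse) = F.reverse := by
    rw [← mul_assoc, ← pow_add, Even.neg_one_pow ⟨n, rfl⟩, one_mul]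
  have hdvd_sr : ∀ g : Polynomial A,
      (g ∣ (signedReciprocal f).map φ ↔ g ∣ F.reverse) := by
    intro g
    rw [hsr]
    constructor
    · intro h
      exact hkey ▸ h.mul_left _
    · intro h
      exact h.mul_left _
  have hrevcount : ∀ γ : A, Multiset.count γ⁻¹ F.reverse.roots = Multiset.count γ F.roots := by
    intro γ
    rw [hroots_rev]
    exact Multiset.count_map_eq_count' _ _ inv_injective _
  constructor
  · intro hreg
    rintro ⟨g, hg2, hgF, hgG⟩
    rw [hdvd_sr] at hgG
    obtain ⟨α, hα⟩ := IsAlgClosed.exists_root g (by rw [hg2]; decide)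
    obtain ⟨q, hq⟩ := dvd_iff_isRoot.mpr hα
    have hg_ne : g ≠ 0 := fun h => by simp [h] at hg2
    have hq0 : q ≠ 0 := fun h => hg_ne (by rw [hq, h, mul_zero])
    have hqnat : q.natDegree = 1 := by
      have hgn : g.natDegree = 2 := natDegree_eq_of_degree_eq_some hg2
      rw [hq, natDegree_mul (X_sub_C_ne_zero α) hq0, natDegree_X_sub_C] at hgn
      omega
    have hq1 : q.degree = 1 := (degree_eq_iff_natDegree_eq hq0).mpr hqnat
    obtain ⟨β, hβ⟩ := exists_root_of_degree_eq_one hq1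
    have hαF : α ∈ F.roots := (mem_roots hF0).mpr (hα.dvd hgF)
    have hβF : β ∈ F.roots := (mem_roots hF0).mpr (hβ.dvd ((Dvd.intro_left _ hq.symm).trans hgF))
    have hαinv : α⁻¹ ∈ F.roots :=
      hinvmem' ((mem_roots hG0).mpr (hα.dvd hgG))
    have hβinv : β⁻¹ ∈ F.roots :=
      hinvmem' ((mem_roots hG0).mpr (hβ.dvd ((Dvd.intro_left _ hq.symm).trans hgG)))
    have hα0 : α ≠ 0 := hrootne α hαF
    have hβ0 : β ≠ 0 := hrootne β hβF
    by_cases hαα : α = α⁻¹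
    · by_cases hββ : β = β⁻¹
      · -- both roots equal to -1
        have hαsq : α * α = 1 := by nth_rewrite 2 [hαα]; exact mul_inv_cancel₀ hα0
        have hβsq : β * β = 1 := by nth_rewrite 2 [hββ]; exact mul_inv_cancel₀ hβ0
        have hαm : α = -1 := by
          rcases mul_self_eq_one_iff.mp hαsq with h | h
          · exact absurd h (hne1 α hαF)
          · exact h
        have hβm : β = -1 := by
          rcases mul_self_eq_one_iff.mp hβsq with h | h
          · exact absurd h (hne1 β hβF)
          · exact h
        obtain ⟨r, hr⟩ := dvd_iff_isRoot.mpr hβ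
        have hgdvd : (X - C α) ^ 2 ∣ g := by
          rw [hq, hr, hβm, ← hαm, sq]
          exact ⟨r, by ring⟩
        have h2F : 2 ≤ rootMultiplicity α F :=
          (le_rootMultiplicity_iff hF0).mpr (hgdvd.trans hgF)
        apply hreg {α, α} ?_ rfl
        · rw [show ({α, α} : Multiset A).prod = α * α by simp, hαsq]
        · rw [Multiset.le_iff_count]
          intro c
          by_cases hc : c = α
          · subst hc
            rw [count_roots]
            simpa using h2F
          · simp [Multiset.count_cons, Multiset.count_singleton, hc]
      · apply hreg {β, β⁻¹} (aux_pair_le hββ hβF hβinv) rfl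
        rw [show ({β, β⁻¹} : Multiset A).prod = β * β⁻¹ by simp, mul_inv_cancel₀ hβ0]
    · apply hreg {α, α⁻¹} (aux_pair_le hαα hαF hαinv) rfl
      rw [show ({α, α⁻¹} : Multiset A).prod = α * α⁻¹ by simp, mul_inv_cancel₀ hα0]
  · intro hng s hle hcard hprod
    apply hng
    obtain ⟨α, β, rfl⟩ := Multiset.card_eq_two.mp hcard
    have hprod' : α * β = 1 := by simpa using hprod
    have hαF : α ∈ F.roots := Multiset.mem_of_le hle (by simp)
    have hβF : β ∈ F.roots := Multiset.mem_of_le hle (by simp)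
    have hα0 : α ≠ 0 := hrootne α hαF
    have hβ0 : β ≠ 0 := hrootne β hβF
    have hβinv : β = α⁻¹ := by
      field_simp
      linear_combination hprod'
    by_cases hab : α = β
    · -- α = β = -1
      have hαsq : α * α = 1 := by nth_rewrite 2 [hab]; exact hprod'
      have hαm : α = -1 := by
        rcases mul_self_eq_one_iff.mp hαsq with h | h
        · exact absurd h (hne1 α hαF)
        · exact h
      have hcount : 2 ≤ Multiset.count α F.roots := by
        have h := Multiset.le_iff_count.mp hle α
        rw [← hab] at h
        simpa using h
      have hinvα : α⁻¹ = α := by rw [hαm, inv_neg, inv_one]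
      have hcountG : 2 ≤ Multiset.count α F.reverse.roots := by
        have h := hrevcount α
        rw [hinvα] at h
        exact le_of_le_of_eq hcount h.symm
      refine ⟨(X - C α) ^ 2, ?_, ?_, ?_⟩
      · rw [degree_pow, degree_X_sub_C]
        rfl
      · exact (le_rootMultiplicity_iff hF0).mp (by rwa [← count_roots])
      · rw [hdvd_sr]
        exact (le_rootMultiplicity_iff hG0).mp (by rwa [← count_roots])
    · refine ⟨(X - C α) * (X - C β), ?_, ?_, ?_⟩
      · rw [degree_mul, degree_X_sub_C, degree_X_sub_C]
        rfl
      · exact (isCoprime_X_sub_C_of_isUnit_sub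
          ((sub_ne_zero_of_ne hab).isUnit)).mul_dvd
          (dvd_iff_isRoot.mpr ((mem_roots hF0).mp hαF))
          (dvd_iff_isRoot.mpr ((mem_roots hF0).mp hβF))
      · rw [hdvd_sr]
        have hαG : α ∈ F.reverse.roots := by
          have := hinvmem hβF
          rwa [show β⁻¹ = α by rw [hβinv, inv_inv]] at this
        have hβG : β ∈ F.reverse.roots := by
          have := hinvmem hαF
          rwa [← hβinv] at this
        exact (isCoprime_X_sub_C_of_isUnit_sub
          ((sub_ne_zero_of_ne hab).isUnit)).mul_dvd
          (dvd_iff_isRoot.mpr ((mem_roots hG0).mp hαG))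
          (dvd_iff_isRoot.mpr ((mem_roots hG0).mp hβG))
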